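/- For every z ∈ ℂ and every τ in the upper half-plane, θ[1;1/2]²·θ[1;0](z,τ)² + θ[1;0]²·θ[1;1/2](z,τ)·θ[1;3/2](z,τ) − θ[1;1/2]²·θ[1;1](z,τ)² = 0. -/

import Mathlib

open Complex

/-- Theta function with characteristics `[ε; ε']` of Farkas and Kra. -/
noncomputable def thetaChar (ε ε' : ℝ) (ζ τ : ℂ) : ℂ :=
  ∑' n : ℤ, Complex.exp (2 * (Real.pi : ℂ) * I *
    ((1 / 2) * ((n : ℂ) + (ε : ℂ) / 2) ^ 2 * τ + ((n : ℂ) + (ε : ℂ) / 2) * (ζ + (ε' : ℂ) / 2)))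

namespace ThetaAux

open Real

/-- half-integer characteristic theta term at `τ/?`: exponent `2πi(½(n+½)²τ + (n+½)w)` -/
noncomputable def G (τ w : ℂ) (n : ℤ) : ℂ :=
  Complex.exp (2 * (π : ℂ) * I * ((1 / 2) * ((n : ℂ) + 1 / 2) ^ 2 * τ + ((n : ℂ) + 1 / 2) * w))

/-- exponent `2πi((n+½)²τ + (n+½)w)` -/
noncomputable def K (τ w : ℂ) (n : ℤ) : ℂ :=
  Complex.exp (2 * (π : ℂ) * I * (((n : ℂ) + 1 / 2) ^ 2 * τ + ((n : ℂ) + 1 / 2) * w))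

/-- exponent `2πi(n²τ + nw)` -/
noncomputable def Hq (τ w : ℂ) (n : ℤ) : ℂ :=
  Complex.exp (2 * (π : ℂ) * I * ((n : ℂ) ^ 2 * τ + (n : ℂ) * w))

lemma summable_norm_jt (z σ : ℂ) (hσ : 0 < σ.im) :
    Summable fun n : ℤ => ‖jacobiTheta₂_term n z σ‖ := by
  apply (summable_pow_mul_jacobiTheta₂_term_bound |z.im| hσ 0).of_nonneg_of_le
    (fun _ => norm_nonneg _)
  simpa only [pow_zero, one_mul] using norm_jacobiTheta₂_term_le hσ le_rfl le_rfl

lemma G_eq (τ w : ℂ) (n : ℤ) :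
    G τ w n = Complex.exp (2 * (π : ℂ) * I * (τ / 8 + w / 2)) *
      jacobiTheta₂_term n (w + τ / 2) τ := by
  rw [G, jacobiTheta₂_term, ← Complex.exp_add]
  congr 1
  push_cast
  ring

lemma K_eq (τ w : ℂ) (n : ℤ) :
    K τ w n = Complex.exp (2 * (π : ℂ) * I * (τ / 4 + w / 2)) *
      jacobiTheta₂_term n (w + τ) (2 * τ) := by
  rw [K, jacobiTheta₂_term, ← Complex.exp_add]
  congr 1
  push_cast
  ring

lemma Hq_eq (τ w : ℂ) (n : ℤ) :
    Hq τ w n = jacobiTheta₂_term n w (2 * τ) := by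
  rw [Hq, jacobiTheta₂_term]
  congr 1
  push_cast
  ring

variable {τ : ℂ}

lemma im2 (hτ : 0 < τ.im) : 0 < (2 * τ).im := by
  simp only [Complex.mul_im, Complex.re_ofNat, Complex.im_ofNat, zero_mul, add_zero]
  linarith

lemma summable_norm_G (hτ : 0 < τ.im) (w : ℂ) : Summable fun n : ℤ => ‖G τ w n‖ := by
  simp only [G_eq, norm_mul]
  exact (summable_norm_jt _ _ hτ).mul_left _

lemma summable_norm_K (hτ : 0 < τ.im) (w : ℂ) : Summable fun n : ℤ => ‖K τ w n‖ := by
  simp only [K_eq, norm_mul]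
  exact (summable_norm_jt _ _ (im2 hτ)).mul_left _

lemma summable_norm_Hq (hτ : 0 < τ.im) (w : ℂ) : Summable fun n : ℤ => ‖Hq τ w n‖ := by
  simp only [Hq_eq]
  exact summable_norm_jt _ _ (im2 hτ)

/-- the set of pairs with even coordinate-sum -/
def evenSet : Set (ℤ × ℤ) := {p | (p.1 + p.2) % 2 = 0}

def evenEquiv : (ℤ × ℤ) ≃ evenSet where
  toFun x := ⟨(x.1 + x.2, x.1 - x.2), by simp only [evenSet, Set.mem_setOf_eq]; omega⟩
  invFun y := ((y.1.1 + y.1.2) / 2, (y.1.1 - y.1.2) / 2)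
  left_inv x := by
    obtain ⟨a, b⟩ := x
    simp only [Prod.mk.injEq]
    omega
  right_inv y := by
    obtain ⟨⟨m, n⟩, h⟩ := y
    simp only [evenSet, Set.mem_setOf_eq] at h
    apply Subtype.ext
    simp only [Prod.mk.injEq]
    omega

def oddEquiv : (ℤ × ℤ) ≃ ↥(evenSetᶜ) where
  toFun x := ⟨(x.1 + x.2, x.1 - x.2 - 1), by
    simp only [evenSet, Set.mem_compl_iff, Set.mem_setOf_eq]; omega⟩
  invFun y := ((y.1.1 + y.1.2 + 1) / 2, (y.1.1 - y.1.2 - 1) / 2)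
  left_inv x := by
    obtain ⟨a, b⟩ := x
    simp only [Prod.mk.injEq]
    omega
  right_inv y := by
    obtain ⟨⟨m, n⟩, h⟩ := y
    simp only [evenSet, Set.mem_compl_iff, Set.mem_setOf_eq] at h
    apply Subtype.ext
    simp only [Prod.mk.injEq]
    omega

lemma master (hτ : 0 < τ.im) (w₁ w₂ : ℂ) :
    (∑' n : ℤ, G τ w₁ n) * (∑' n : ℤ, G τ w₂ n) =
      (∑' n : ℤ, K τ (w₁ + w₂) n) * (∑' n : ℤ, Hq τ (w₁ - w₂) n) +
      (∑' n : ℤ, Hq τ (w₁ + w₂) n) * (∑' n : ℤ, K τ (w₁ - w₂) n) := by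
  have hG₁ := summable_norm_G hτ w₁
  have hG₂ := summable_norm_G hτ w₂
  have hf : Summable (fun p : ℤ × ℤ => G τ w₁ p.1 * G τ w₂ p.2) :=
    summable_mul_of_summable_norm hG₁ hG₂
  rw [tsum_mul_tsum_of_summable_norm hG₁ hG₂,
    tsum_mul_tsum_of_summable_norm (summable_norm_K hτ _) (summable_norm_Hq hτ _),
    tsum_mul_tsum_of_summable_norm (summable_norm_Hq hτ _) (summable_norm_K hτ _),
    ← hf.tsum_subtype_add_tsum_subtype_compl evenSet]
  congr 1
  · rw [← evenEquiv.tsum_eq]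
    apply tsum_congr
    rintro ⟨a, b⟩
    show G τ w₁ (a + b) * G τ w₂ (a - b) = K τ (w₁ + w₂) a * Hq τ (w₁ - w₂) b
    rw [G, G, K, Hq, ← Complex.exp_add, ← Complex.exp_add]
    congr 1
    push_cast
    ring
  · rw [← oddEquiv.tsum_eq]
    apply tsum_congr
    rintro ⟨a, b⟩
    show G τ w₁ (a + b) * G τ w₂ (a - b - 1) = Hq τ (w₁ + w₂) a * K τ (w₁ - w₂) b
    rw [G, G, K, Hq, ← Complex.exp_add, ← Complex.exp_add]
    congr 1
    push_cast
    ring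

lemma master' (hτ : 0 < τ.im) (w₁ w₂ u v : ℂ) (hu : u = w₁ + w₂) (hv : v = w₁ - w₂) :
    (∑' n : ℤ, G τ w₁ n) * (∑' n : ℤ, G τ w₂ n) =
      (∑' n : ℤ, K τ u n) * (∑' n : ℤ, Hq τ v n) +
      (∑' n : ℤ, Hq τ u n) * (∑' n : ℤ, K τ v n) := by
  subst hu hv
  exact master hτ w₁ w₂

lemma K_add_one (τ w : ℂ) (n : ℤ) : K τ (w + 1) n = -K τ w n := by
  have h1 : Complex.exp (2 * (π : ℂ) * I * (((n : ℂ) + 1 / 2) * 1)) = -1 := by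
    rw [show 2 * (π : ℂ) * I * (((n : ℂ) + 1 / 2) * 1) = (n : ℤ) * (2 * π * I) + π * I by
        push_cast; ring,
      Complex.exp_add, Complex.exp_int_mul_two_pi_mul_I, Complex.exp_pi_mul_I, one_mul]
  calc K τ (w + 1) n
      = K τ w n * Complex.exp (2 * (π : ℂ) * I * (((n : ℂ) + 1 / 2) * 1)) := by
        rw [K, K, ← Complex.exp_add]; congr 1; ring
    _ = -K τ w n := by rw [h1]; ring

lemma Hq_add_one (τ w : ℂ) (n : ℤ) : Hq τ (w + 1) n = Hq τ w n := by
  have h1 : Complex.exp (2 * (π : ℂ) * I * ((n : ℂ) * 1)) = 1 := by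
    rw [show 2 * (π : ℂ) * I * ((n : ℂ) * 1) = (n : ℤ) * (2 * π * I) by push_cast; ring,
      Complex.exp_int_mul_two_pi_mul_I]
  calc Hq τ (w + 1) n
      = Hq τ w n * Complex.exp (2 * (π : ℂ) * I * ((n : ℂ) * 1)) := by
        rw [Hq, Hq, ← Complex.exp_add]; congr 1; ring
    _ = Hq τ w n := by rw [h1, mul_one]

lemma P_neg (τ w : ℂ) : (∑' n : ℤ, K τ (-w) n) = ∑' n : ℤ, K τ w n := by
  rw [← (Equiv.subLeft (-1 : ℤ)).tsum_eq (fun n => K τ (-w) n)]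
  apply tsum_congr
  intro n
  simp only [Equiv.subLeft_apply]
  rw [K, K]
  congr 1
  push_cast
  ring

lemma Q_neg (τ w : ℂ) : (∑' n : ℤ, Hq τ (-w) n) = ∑' n : ℤ, Hq τ w n := by
  rw [← (Equiv.neg ℤ).tsum_eq (fun n => Hq τ (-w) n)]
  apply tsum_congr
  intro n
  simp only [Equiv.neg_apply]
  rw [Hq, Hq]
  congr 1
  push_cast
  ring

lemma P_half (τ : ℂ) : (∑' n : ℤ, K τ (1 / 2 : ℂ) n) = 0 := by
  have key : ∀ n : ℤ, K τ (1 / 2 : ℂ) (-1 - n) = -K τ (1 / 2 : ℂ) n := by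
    intro n
    have h1 : Complex.exp (-(2 * (π : ℂ) * I * ((n : ℂ) + 1 / 2) * 2 * (1 / 2))) = -1 := by
      rw [show -(2 * (π : ℂ) * I * ((n : ℂ) + 1 / 2) * 2 * (1 / 2)) =
          (-(n + 1) : ℤ) * (2 * π * I) + π * I by push_cast; ring,
        Complex.exp_add, Complex.exp_int_mul_two_pi_mul_I, Complex.exp_pi_mul_I, one_mul]
    calc K τ (1 / 2 : ℂ) (-1 - n)
        = K τ (1 / 2 : ℂ) n *
            Complex.exp (-(2 * (π : ℂ) * I * ((n : ℂ) + 1 / 2) * 2 * (1 / 2))) := by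
          rw [K, K, ← Complex.exp_add]; congr 1; push_cast; ring
      _ = -K τ (1 / 2 : ℂ) n := by rw [h1]; ring
  have h : (∑' n : ℤ, K τ (1 / 2 : ℂ) n) = -(∑' n : ℤ, K τ (1 / 2 : ℂ) n) := by
    conv_lhs => rw [← (Equiv.subLeft (-1 : ℤ)).tsum_eq (fun n => K τ (1 / 2 : ℂ) n)]
    rw [← tsum_neg]
    apply tsum_congr
    intro n
    simpa only [Equiv.subLeft_apply] using key n
  linear_combination h / 2

lemma thetaChar_eq (ε' : ℝ) (z τ w : ℂ) (hw : w = z + (ε' : ℂ) / 2) :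
    thetaChar 1 ε' z τ = ∑' n : ℤ, G τ w n := by
  subst hw
  unfold thetaChar G
  apply tsum_congr
  intro n
  congr 1

end ThetaAux

theorem stmt_0 (z τ : ℂ) (hτ : 0 < τ.im) :
    thetaChar 1 (1/2) 0 τ ^ 2 * thetaChar 1 0 z τ ^ 2
      + thetaChar 1 0 0 τ ^ 2 * thetaChar 1 (1/2) z τ * thetaChar 1 (3/2) z τ
      - thetaChar 1 (1/2) 0 τ ^ 2 * thetaChar 1 1 z τ ^ 2 = 0 := by
  open ThetaAux in
  rw [thetaChar_eq (1/2) 0 τ (1/4 : ℂ) (by push_cast; ring),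
    thetaChar_eq 0 z τ z (by push_cast; ring),
    thetaChar_eq 0 0 τ 0 (by push_cast; ring),
    thetaChar_eq (1/2) z τ (z + 1/4) (by push_cast; ring),
    thetaChar_eq (3/2) z τ (z + 3/4) (by push_cast; ring),
    thetaChar_eq 1 z τ (z + 1/2) (by push_cast; ring)]
  have hA := ThetaAux.master' hτ (1/4 : ℂ) (1/4 : ℂ) (1/2 : ℂ) 0 (by ring) (by ring)
  have hFz := ThetaAux.master' hτ z z (2*z) 0 (by ring) (by ring)
  have hF0 := ThetaAux.master' hτ (0 : ℂ) 0 0 0 (by ring) (by ring)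
  have hFh := ThetaAux.master' hτ (z + 1/2) (z + 1/2) (2*z + 1) 0 (by ring) (by ring)
  have hFq := ThetaAux.master' hτ (z + 1/4) (z + 3/4) (2*z + 1) (-(1/2 : ℂ)) (by ring) (by ring)
  have hP1 : (∑' n : ℤ, ThetaAux.K τ (2*z + 1) n) = -∑' n : ℤ, ThetaAux.K τ (2*z) n := by
    rw [← tsum_neg]
    exact tsum_congr fun n => ThetaAux.K_add_one τ (2*z) n
  have hQ1 : (∑' n : ℤ, ThetaAux.Hq τ (2*z + 1) n) = ∑' n : ℤ, ThetaAux.Hq τ (2*z) n :=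
    tsum_congr fun n => ThetaAux.Hq_add_one τ (2*z) n
  have hPn := ThetaAux.P_neg τ (1/2 : ℂ)
  have hQn := ThetaAux.Q_neg τ (1/2 : ℂ)
  have hPh := ThetaAux.P_half τ
  rw [hP1, hQ1, hPn, hQn, hPh] at hFq
  rw [hP1, hQ1] at hFh
  rw [hPh] at hA
  set a := ∑' n : ℤ, ThetaAux.G τ (1/4 : ℂ) n
  set b := ∑' n : ℤ, ThetaAux.G τ z n
  set c := ∑' n : ℤ, ThetaAux.G τ (0 : ℂ) n
  set d := ∑' n : ℤ, ThetaAux.G τ (z + 1/4) n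
  set e := ∑' n : ℤ, ThetaAux.G τ (z + 3/4) n
  set f := ∑' n : ℤ, ThetaAux.G τ (z + 1/2) n
  set p := ∑' n : ℤ, ThetaAux.K τ (2*z) n
  set q := ∑' n : ℤ, ThetaAux.Hq τ (0 : ℂ) n
  set r := ∑' n : ℤ, ThetaAux.Hq τ (2*z) n
  set s := ∑' n : ℤ, ThetaAux.K τ (0 : ℂ) n
  set v := ∑' n : ℤ, ThetaAux.Hq τ (1/2 : ℂ) n
  linear_combination (b^2 - f^2) * hA + v*s * hFz - v*s * hFh + d*e * hF0 + 2*s*q * hFq
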